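/- Let 1 ≤ a ≤ √3, c = (9/8)(a + 1/a), and for K > c²/9 set α = (1/2)(3 - 3a² + √(9a⁴ - 4ca³ + 4Ka²)), β = (1/2)(3 - 3a² - √(9a⁴ - 4ca³ + 4Ka²)), γ = √(Ka² - ca + 9/4), T(K,a) = ∫_α^γ 4a ds / (√((s-α)(s-β))·√(γ² - s²)). Then T(K,a) tends to 0 as K tends to +∞. -/

import Mathlib

open Real intervalIntegral Filter Topology

noncomputable def alphaSU2 (a c K : ℝ) : ℝ :=
  (1 / 2) * (3 - 3 * a ^ 2 + Real.sqrt (9 * a ^ 4 - 4 * c * a ^ 3 + 4 * K * a ^ 2))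

noncomputable def betaSU2 (a c K : ℝ) : ℝ :=
  (1 / 2) * (3 - 3 * a ^ 2 - Real.sqrt (9 * a ^ 4 - 4 * c * a ^ 3 + 4 * K * a ^ 2))

noncomputable def gammaSU2 (a c K : ℝ) : ℝ :=
  Real.sqrt (K * a ^ 2 - c * a + 9 / 4)

/-- The period of the closed Lie–Poisson orbit on `SU(2)`. -/
noncomputable def periodSU2 (a c K : ℝ) : ℝ :=
  ∫ s in (alphaSU2 a c K)..(gammaSU2 a c K),
    4 * a / (Real.sqrt ((s - alphaSU2 a c K) * (s - betaSU2 a c K)) *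
      Real.sqrt ((gammaSU2 a c K) ^ 2 - s ^ 2))

set_option maxHeartbeats 1000000

open MeasureTheory
lemma aux_one_div_sqrt (x : ℝ) : 1 / Real.sqrt x = x ^ (-(1/2) : ℝ) := by
  rcases lt_or_ge x 0 with hx | hx
  · rw [Real.sqrt_eq_zero_of_nonpos hx.le, Real.rpow_def_of_neg hx,
      show (-(1/2) : ℝ) * π = -(π/2) by ring, Real.cos_neg, Real.cos_pi_div_two,
      mul_zero, div_zero]
  · rw [Real.sqrt_eq_rpow, Real.rpow_neg hx, one_div]

lemma aux_sqrt_tendsto : Tendsto Real.sqrt atTop atTop := by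
  apply tendsto_atTop_atTop.2
  intro b
  refine ⟨(max b 0) ^ 2, fun x hx => le_trans (le_max_left b 0) ?_⟩
  exact (Real.le_sqrt (le_max_right b 0) (le_trans (sq_nonneg _) hx)).mpr hx

lemma aux_ev_le_sqrt (p q X : ℝ) (hp : 0 < p) :
    ∀ᶠ K in atTop, X ≤ Real.sqrt (q + K * p) := by
  filter_upwards [eventually_ge_atTop ((max X 0 ^ 2 - q) / p)] with K hK
  rw [div_le_iff₀ hp] at hK
  have h2 : max X 0 ^ 2 ≤ q + K * p := by linarith
  exact le_trans (le_max_left X 0)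
    ((Real.le_sqrt (le_max_right X 0) (le_trans (sq_nonneg _) h2)).mpr h2)

lemma aux_integral_inv_sqrt (A b : ℝ) :
    (∫ s in A..b, (s - A) ^ (-(1/2) : ℝ)) = 2 * Real.sqrt (b - A) := by
  rw [intervalIntegral.integral_comp_sub_right (fun x => x ^ (-(1/2) : ℝ)) A, sub_self,
    integral_rpow (Or.inl (by norm_num)), Real.sqrt_eq_rpow]
  rw [Real.zero_rpow (by norm_num)]
  norm_num
  ring

lemma aux_integral_inv_sqrt_rev (m G : ℝ) :
    (∫ s in m..G, (G - s) ^ (-(1/2) : ℝ)) = 2 * Real.sqrt (G - m) := by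
  rw [intervalIntegral.integral_comp_sub_left (fun x => x ^ (-(1/2) : ℝ)) G, sub_self,
    integral_rpow (Or.inl (by norm_num)), Real.sqrt_eq_rpow]
  rw [Real.zero_rpow (by norm_num)]
  norm_num
  ring

lemma aux_intInt (A b : ℝ) :
    IntervalIntegrable (fun s => (s - A) ^ (-(1/2) : ℝ)) volume A b := by
  have h := (intervalIntegral.intervalIntegrable_rpow' (by norm_num : (-1:ℝ) < -(1/2))
    (a := 0) (b := b - A)).comp_sub_right A
  rw [zero_add, sub_add_cancel] at h
  exact h

lemma aux_intInt_rev (m G : ℝ) :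
    IntervalIntegrable (fun s => (G - s) ^ (-(1/2) : ℝ)) volume m G := by
  have h := (intervalIntegral.intervalIntegrable_rpow' (by norm_num : (-1:ℝ) < -(1/2))
    (a := 0) (b := G - m)).comp_sub_left G
  rw [sub_zero, sub_sub_cancel] at h
  exact h.symm

lemma key (a c : ℝ) (ha : 1 < a) (hc : c = 9 / 8 * (a + 1 / a)) :
    Tendsto (fun K => periodSU2 a c K) atTop (𝓝 0) := by
  have ha0 : 0 < a := lt_trans one_pos ha
  have ha2 : 1 < a ^ 2 := by nlinarith
  set L : ℝ := 3 * (a ^ 2 - 1) / 4 with hLdef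
  have hL0 : 0 < L := by rw [hLdef]; linarith
  have hL2 : (0:ℝ) < L / 2 := by linarith
  have evD : ∀ X : ℝ, ∀ᶠ K in atTop,
      X ≤ Real.sqrt (9 * a ^ 4 - 4 * c * a ^ 3 + 4 * K * a ^ 2) := by
    intro X
    have h := aux_ev_le_sqrt (4 * a ^ 2) (9 * a ^ 4 - 4 * c * a ^ 3) X (by positivity)
    exact h.mono fun K hK => by
      rw [show 9 * a ^ 4 - 4 * c * a ^ 3 + 4 * K * a ^ 2
          = 9 * a ^ 4 - 4 * c * a ^ 3 + K * (4 * a ^ 2) by ring]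
      exact hK
  have evG : ∀ X : ℝ, ∀ᶠ K in atTop, X ≤ gammaSU2 a c K := by
    intro X
    have h := aux_ev_le_sqrt (a ^ 2) (-(c * a) + 9 / 4) X (by positivity)
    exact h.mono fun K hK => by
      rw [gammaSU2, show K * a ^ 2 - c * a + 9 / 4 = -(c * a) + 9 / 4 + K * a ^ 2 by ring]
      exact hK
  have hbound : ∀ᶠ K in atTop, 0 ≤ periodSU2 a c K ∧
      periodSU2 a c K ≤ (16 * a / Real.sqrt (L / 2)) /
        Real.sqrt (Real.sqrt (9 * a ^ 4 - 4 * c * a ^ 3 + 4 * K * a ^ 2)) := by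
    filter_upwards [evD 1, evD (3 * (a ^ 2 - 1)), evD ((L ^ 2 + 9 / 8 * (a ^ 4 - 1)) / L),
      evG 1] with K hD1 hD2 hD3 hG1
    unfold periodSU2
    set D := Real.sqrt (9 * a ^ 4 - 4 * c * a ^ 3 + 4 * K * a ^ 2) with hDdef
    have hD0 : 0 < D := lt_of_lt_of_le one_pos hD1
    have hargD : (0:ℝ) < 9 * a ^ 4 - 4 * c * a ^ 3 + 4 * K * a ^ 2 := by
      by_contra hcon
      rw [hDdef] at hD0
      exact absurd (Real.sqrt_pos.mp hD0) hcon
    have hDsq : D ^ 2 = 9 * a ^ 4 - 4 * c * a ^ 3 + 4 * K * a ^ 2 := by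
      rw [hDdef]; exact Real.sq_sqrt hargD.le
    set G := gammaSU2 a c K with hGdef
    have hG0 : 0 < G := lt_of_lt_of_le one_pos hG1
    have hargG : (0:ℝ) < K * a ^ 2 - c * a + 9 / 4 := by
      by_contra hcon
      rw [hGdef, gammaSU2] at hG0
      exact absurd (Real.sqrt_pos.mp hG0) hcon
    have hGsq : G ^ 2 = K * a ^ 2 - c * a + 9 / 4 := by
      rw [hGdef, gammaSU2]; exact Real.sq_sqrt hargG.le
    set A := alphaSU2 a c K with hAdef
    set B := betaSU2 a c K with hBdef
    have hA : A = (3 - 3 * a ^ 2) / 2 + D / 2 := by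
      rw [hAdef, alphaSU2, hDdef]; ring
    have hB : B = (3 - 3 * a ^ 2) / 2 - D / 2 := by
      rw [hBdef, betaSU2, hDdef]; ring
    clear_value L D G A B
    have hA0 : 0 ≤ A := by rw [hA]; linarith
    have hc9 : c * a ^ 3 - c * a = 9 / 8 * (a ^ 4 - 1) := by
      rw [hc]; field_simp; ring
    have hDL : L ^ 2 + 9 / 8 * (a ^ 4 - 1) ≤ D * L := by
      rw [div_le_iff₀ hL0] at hD3; linarith
    have hALnn : 0 ≤ A + L := by linarith
    have hALG : A + L ≤ G := by
      have hAL2 : A + L = D / 2 - L := by rw [hA]; linarith [hLdef]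
      have hsq : (A + L) ^ 2 ≤ G ^ 2 := by
        rw [hAL2, show (D / 2 - L) ^ 2 = D ^ 2 / 4 - D * L + L ^ 2 by ring, hDsq, hGsq]
        linarith [hDL, hc9]
      calc A + L = Real.sqrt ((A + L) ^ 2) := (Real.sqrt_sq hALnn).symm
        _ ≤ Real.sqrt (G ^ 2) := Real.sqrt_le_sqrt hsq
        _ = G := Real.sqrt_sq hG0.le
    have hAG : A ≤ G := by linarith
    set m := (A + G) / 2 with hmdef
    have hAm : A ≤ m := by rw [hmdef]; linarith
    have hmG : m ≤ G := by rw [hmdef]; linarith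
    have hABD : A - B = D := by rw [hA, hB]; ring
    set M : ℝ := 4 * a / (Real.sqrt D * Real.sqrt (L / 2) * Real.sqrt G) with hMdef
    have hM0 : 0 ≤ M := by
      apply div_nonneg (by linarith)
      exact mul_nonneg (mul_nonneg (Real.sqrt_nonneg _) (Real.sqrt_nonneg _)) (Real.sqrt_nonneg _)
    set f : ℝ → ℝ := fun s =>
      4 * a / (Real.sqrt ((s - A) * (s - B)) * Real.sqrt (G ^ 2 - s ^ 2)) with hfdef
    have hfnn : ∀ s ∈ Set.Icc A G, 0 ≤ f s := by
      intro s _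
      rw [hfdef]
      exact div_nonneg (by linarith)
        (mul_nonneg (Real.sqrt_nonneg _) (Real.sqrt_nonneg _))
    clear_value m M f
    refine ⟨intervalIntegral.integral_nonneg hAG hfnn, ?_⟩
    by_cases hInt : IntervalIntegrable f volume A G
    · -- pointwise bounds
      have hpt1 : ∀ s ∈ Set.Icc A m, f s ≤ M * (s - A) ^ (-(1/2) : ℝ) := by
        intro s hs
        rw [← aux_one_div_sqrt, mul_one_div]
        rcases eq_or_lt_of_le hs.1 with h | h
        · rw [← h]
          simp [hfdef]
        · have hu : 0 < s - A := sub_pos.mpr h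
          have hsB : D ≤ s - B := by linarith [hABD, hs.1]
          have hGs : L / 2 ≤ G - s := by
            have h2 := hs.2
            rw [hmdef] at h2
            linarith
          have hs0 : 0 ≤ s := le_trans hA0 hs.1
          have hd1 : Real.sqrt (s - A) * Real.sqrt D ≤ Real.sqrt ((s - A) * (s - B)) := by
            rw [← Real.sqrt_mul hu.le]
            exact Real.sqrt_le_sqrt (mul_le_mul_of_nonneg_left hsB hu.le)
          have hd2 : Real.sqrt (L / 2) * Real.sqrt G ≤ Real.sqrt (G ^ 2 - s ^ 2) := by
            rw [← Real.sqrt_mul hL2.le]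
            apply Real.sqrt_le_sqrt
            calc L / 2 * G ≤ L / 2 * (G + s) := by
                  exact mul_le_mul_of_nonneg_left (by linarith) hL2.le
              _ ≤ (G - s) * (G + s) := by
                  exact mul_le_mul_of_nonneg_right hGs (by linarith)
              _ = G ^ 2 - s ^ 2 := by ring
          have hdpos : 0 < Real.sqrt (s - A) * Real.sqrt D * (Real.sqrt (L / 2) * Real.sqrt G) :=
            mul_pos (mul_pos (Real.sqrt_pos.mpr hu) (Real.sqrt_pos.mpr hD0))
              (mul_pos (Real.sqrt_pos.mpr hL2) (Real.sqrt_pos.mpr hG0))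
          calc f s = 4 * a / (Real.sqrt ((s - A) * (s - B)) * Real.sqrt (G ^ 2 - s ^ 2)) := by rw [hfdef]
            _ ≤ 4 * a / (Real.sqrt (s - A) * Real.sqrt D * (Real.sqrt (L / 2) * Real.sqrt G)) := by
                apply div_le_div_of_nonneg_left (by linarith) hdpos
                exact mul_le_mul hd1 hd2
                  (mul_nonneg (Real.sqrt_nonneg _) (Real.sqrt_nonneg _)) (Real.sqrt_nonneg _)
            _ = M / Real.sqrt (s - A) := by
                rw [show Real.sqrt (s - A) * Real.sqrt D * (Real.sqrt (L / 2) * Real.sqrt G)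
                    = Real.sqrt D * Real.sqrt (L / 2) * Real.sqrt G * Real.sqrt (s - A) by ring,
                  ← div_div, ← hMdef]
      have hpt2 : ∀ s ∈ Set.Icc m G, f s ≤ M * (G - s) ^ (-(1/2) : ℝ) := by
        intro s hs
        rw [← aux_one_div_sqrt, mul_one_div]
        rcases eq_or_lt_of_le hs.2 with h | h
        · rw [h]
          simp [hfdef, sub_self]
        · have hu : 0 < G - s := sub_pos.mpr h
          have hsA : L / 2 ≤ s - A := by
            have h1 := hs.1
            rw [hmdef] at h1
            linarith
          have hsB : D ≤ s - B := by linarith [hABD]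
          have hs0 : 0 ≤ s := by linarith
          have hd1 : Real.sqrt (L / 2) * Real.sqrt D ≤ Real.sqrt ((s - A) * (s - B)) := by
            rw [← Real.sqrt_mul hL2.le]
            exact Real.sqrt_le_sqrt (mul_le_mul hsA hsB hD0.le (by linarith))
          have hd2 : Real.sqrt (G - s) * Real.sqrt G ≤ Real.sqrt (G ^ 2 - s ^ 2) := by
            rw [← Real.sqrt_mul hu.le]
            apply Real.sqrt_le_sqrt
            calc (G - s) * G ≤ (G - s) * (G + s) := by
                  exact mul_le_mul_of_nonneg_left (by linarith) hu.le
              _ = G ^ 2 - s ^ 2 := by ring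
          have hdpos : 0 < Real.sqrt (L / 2) * Real.sqrt D * (Real.sqrt (G - s) * Real.sqrt G) :=
            mul_pos (mul_pos (Real.sqrt_pos.mpr hL2) (Real.sqrt_pos.mpr hD0))
              (mul_pos (Real.sqrt_pos.mpr hu) (Real.sqrt_pos.mpr hG0))
          calc f s = 4 * a / (Real.sqrt ((s - A) * (s - B)) * Real.sqrt (G ^ 2 - s ^ 2)) := by rw [hfdef]
            _ ≤ 4 * a / (Real.sqrt (L / 2) * Real.sqrt D * (Real.sqrt (G - s) * Real.sqrt G)) := by
                apply div_le_div_of_nonneg_left (by linarith) hdpos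
                exact mul_le_mul hd1 hd2
                  (mul_nonneg (Real.sqrt_nonneg _) (Real.sqrt_nonneg _)) (Real.sqrt_nonneg _)
            _ = M / Real.sqrt (G - s) := by
                rw [show Real.sqrt (L / 2) * Real.sqrt D * (Real.sqrt (G - s) * Real.sqrt G)
                    = Real.sqrt D * Real.sqrt (L / 2) * Real.sqrt G * Real.sqrt (G - s) by ring,
                  ← div_div, ← hMdef]
      have hfm : IntervalIntegrable f volume A m := by
        apply hInt.mono_set
        rw [Set.uIcc_of_le hAm, Set.uIcc_of_le hAG]
        exact Set.Icc_subset_Icc le_rfl hmG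
      have hfm2 : IntervalIntegrable f volume m G := by
        apply hInt.mono_set
        rw [Set.uIcc_of_le hmG, Set.uIcc_of_le hAG]
        exact Set.Icc_subset_Icc hAm le_rfl
      have hg1 : IntervalIntegrable (fun s => M * (s - A) ^ (-(1/2) : ℝ)) volume A m :=
        (aux_intInt A m).const_mul M
      have hg2 : IntervalIntegrable (fun s => M * (G - s) ^ (-(1/2) : ℝ)) volume m G :=
        (aux_intInt_rev m G).const_mul M
      have hI1 : (∫ s in A..m, f s) ≤ M * (2 * Real.sqrt (m - A)) := by
        calc (∫ s in A..m, f s) ≤ ∫ s in A..m, M * (s - A) ^ (-(1/2) : ℝ) :=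
              intervalIntegral.integral_mono_on hAm hfm hg1 hpt1
          _ = M * (2 * Real.sqrt (m - A)) := by
              rw [intervalIntegral.integral_const_mul, aux_integral_inv_sqrt]
      have hI2 : (∫ s in m..G, f s) ≤ M * (2 * Real.sqrt (G - m)) := by
        calc (∫ s in m..G, f s) ≤ ∫ s in m..G, M * (G - s) ^ (-(1/2) : ℝ) :=
              intervalIntegral.integral_mono_on hmG hfm2 hg2 hpt2
          _ = M * (2 * Real.sqrt (G - m)) := by
              rw [intervalIntegral.integral_const_mul, aux_integral_inv_sqrt_rev]
      have hsplit : (∫ s in A..G, f s) = (∫ s in A..m, f s) + ∫ s in m..G, f s :=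
        (intervalIntegral.integral_add_adjacent_intervals hfm hfm2).symm
      have h1 : Real.sqrt (m - A) ≤ Real.sqrt G := Real.sqrt_le_sqrt (by rw [hmdef]; linarith)
      have h2 : Real.sqrt (G - m) ≤ Real.sqrt G := Real.sqrt_le_sqrt (by rw [hmdef]; linarith)
      have hfin : (∫ s in A..G, f s) ≤ 4 * M * Real.sqrt G := by
        rw [hsplit]
        have b1 : M * (2 * Real.sqrt (m - A)) ≤ M * (2 * Real.sqrt G) := by
          apply mul_le_mul_of_nonneg_left (by linarith) hM0
        have b2 : M * (2 * Real.sqrt (G - m)) ≤ M * (2 * Real.sqrt G) := by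
          apply mul_le_mul_of_nonneg_left (by linarith) hM0
        linarith [hI1, hI2]
      have hsG : Real.sqrt G ≠ 0 := ne_of_gt (Real.sqrt_pos.mpr hG0)
      have hsD : Real.sqrt D ≠ 0 := ne_of_gt (Real.sqrt_pos.mpr hD0)
      have hsL : Real.sqrt (L / 2) ≠ 0 := ne_of_gt (Real.sqrt_pos.mpr hL2)
      calc (∫ s in A..G, f s) ≤ 4 * M * Real.sqrt G := hfin
        _ = (16 * a / Real.sqrt (L / 2)) / Real.sqrt D := by
            rw [hMdef]
            field_simp
            ring
    · rw [intervalIntegral.integral_undef hInt]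
      apply div_nonneg (div_nonneg (by linarith) (Real.sqrt_nonneg _)) (Real.sqrt_nonneg _)
  refine squeeze_zero' (hbound.mono fun K h => h.1) (hbound.mono fun K h => h.2) ?_
  apply Tendsto.div_atTop tendsto_const_nhds
  have hlin : Tendsto (fun K : ℝ => 9 * a ^ 4 - 4 * c * a ^ 3 + 4 * K * a ^ 2) atTop atTop := by
    apply tendsto_atTop_add_const_left
    have h4 : Tendsto (fun K : ℝ => 4 * K) atTop atTop :=
      Tendsto.const_mul_atTop (by norm_num) tendsto_id
    exact Tendsto.atTop_mul_const (by positivity) h4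
  exact aux_sqrt_tendsto.comp (aux_sqrt_tendsto.comp hlin)

/-- The period `T(K,a)` tends to `0` as `K → ∞`. -/
theorem stmt_15 (a : ℝ) (ha1 : 1 ≤ a) (ha2 : a ≤ Real.sqrt 3)
    (c : ℝ) (hc : c = 9 / 8 * (a + 1 / a)) :
    Tendsto (fun K => periodSU2 a c K) atTop (𝓝 0) := by
  rcases ha1.eq_or_lt with h1 | h1
  · subst h1
    have hc' : c = 9 / 4 := by norm_num at hc; exact hc
    have hAG : ∀ K : ℝ, alphaSU2 1 c K = gammaSU2 1 c K := by
      intro K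
      rw [alphaSU2, gammaSU2, hc']
      norm_num
      ring
    have hzero : (fun K => periodSU2 1 c K) = fun _ => (0:ℝ) := by
      funext K
      rw [periodSU2, hAG K, intervalIntegral.integral_same]
    rw [hzero]
    exact tendsto_const_nhds
  · exact key a c h1 hc
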